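/- Let α, x, y, z ∈ ℂ with x + y + z = α, and let ℓ, n, r be natural numbers. Then (−1)^n Σ_{k=0}^{n+r} C(n+r,k) C(ℓ+k+r,r) x^{n+r−k} B_{ℓ+k}^{(α)}(y) = (−1)^{ℓ+r} Σ_{k=0}^{ℓ+r} C(ℓ+r,k) C(n+k+r,r) x^{ℓ+r−k} B_{n+k}^{(α)}(z). -/

import Mathlib

open scoped BigOperators
open Polynomial Finset

noncomputable section

/-- The formal power series `(e^t - 1)/t` over `ℂ` (constant term `1`). -/
def expSub1DivT : PowerSeries ℂ := PowerSeries.mk fun n => ((n + 1).factorial : ℂ)⁻¹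

/-- The formal power series `t/(e^t - 1)` over `ℂ`. -/
def bernoulliBase : PowerSeries ℂ := expSub1DivT⁻¹

/-- The formal logarithm of a power series with constant term `1`:
`log F = ∑_{k ≥ 1} (-1)^(k+1) (F-1)^k / k`, computed coefficientwise
(only the terms with `k ≤ n` contribute to the `n`-th coefficient). -/
def formalLog (F : PowerSeries ℂ) : PowerSeries ℂ :=
  PowerSeries.mk fun n =>
    ∑ k ∈ Finset.range (n + 1),
      (-1 : ℂ) ^ (k + 1) * (k : ℂ)⁻¹ * PowerSeries.coeff n ((F - 1) ^ k)

/-- The formal exponential of a power series with zero constant term: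
`exp H = ∑_{k ≥ 0} H^k / k!`, computed coefficientwise. -/
def formalExp (H : PowerSeries ℂ) : PowerSeries ℂ :=
  PowerSeries.mk fun n =>
    ∑ k ∈ Finset.range (n + 1), ((k.factorial : ℂ))⁻¹ * PowerSeries.coeff n (H ^ k)

/-- `(t/(e^t - 1))^α := exp (α • log (t/(e^t - 1)))`. -/
def bernoulliBasePow (α : ℂ) : PowerSeries ℂ := formalExp (α • formalLog bernoulliBase)

/-- The generalized Bernoulli numbers `B_n^{(α)}`, defined by
`∑ B_n^{(α)} t^n / n! = (t/(e^t-1))^α`. -/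
def genBernoulliNumber (α : ℂ) (n : ℕ) : ℂ :=
  (n.factorial : ℂ) * PowerSeries.coeff n (bernoulliBasePow α)

/-- The generalized Bernoulli polynomials `B_n^{(α)}(x)`, defined by
`∑ B_n^{(α)}(x) t^n / n! = (t/(e^t-1))^α e^{t x}`; equivalently
`B_n^{(α)}(x) = ∑_{k ≤ n} C(n,k) B_k^{(α)} x^{n-k}`. -/
def genBernoulliPoly (α : ℂ) (n : ℕ) : Polynomial ℂ :=
  ∑ k ∈ Finset.range (n + 1),
    Polynomial.C ((n.choose k : ℂ) * genBernoulliNumber α k) * Polynomial.X ^ (n - k)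

/-- `Ω_γ`: the unique `ℂ`-linear endomorphism of `ℂ[X]` with `Ω_γ (X^n) = B_n^{(γ)}(X)`. -/
def OmegaOp (γ : ℂ) (P : Polynomial ℂ) : Polynomial ℂ :=
  P.sum fun n a => Polynomial.C a * genBernoulliPoly γ n

end

open Polynomial Finset PowerSeries


section PS
variable {G H F : PowerSeries ℂ}

lemma coeff_pow_eq_zero' (hH : PowerSeries.constantCoeff H = 0) :
    ∀ {k n : ℕ}, n < k → PowerSeries.coeff n (H ^ k) = 0 := by
  intro k
  induction k with
  | zero => intro n h; omega
  | succ k ih =>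
    intro n h
    rw [pow_succ, PowerSeries.coeff_mul]
    apply Finset.sum_eq_zero
    rintro ⟨a, b⟩ hab
    rw [Finset.HasAntidiagonal.mem_antidiagonal] at hab
    rcases lt_or_ge a k with ha | ha
    · rw [ih ha, zero_mul]
    · have hb : b = 0 := by omega
      subst hb
      rw [PowerSeries.coeff_zero_eq_constantCoeff, hH, mul_zero]

lemma coeff_mul_pow_eq_zero (hG : PowerSeries.constantCoeff G = 0)
    (hH : PowerSeries.constantCoeff H = 0) {n i j : ℕ} (h : n < i + j) :
    PowerSeries.coeff n (G ^ i * H ^ j) = 0 := by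
  rw [PowerSeries.coeff_mul]
  apply Finset.sum_eq_zero
  rintro ⟨a, b⟩ hab
  rw [Finset.HasAntidiagonal.mem_antidiagonal] at hab
  rcases lt_or_ge a i with ha | ha
  · rw [coeff_pow_eq_zero' hG ha, zero_mul]
  · have hb : b < j := by omega
    rw [coeff_pow_eq_zero' hH hb, mul_zero]

lemma coeff_formalExp (hH : PowerSeries.constantCoeff H = 0) (n M : ℕ) (hM : n < M) :
    PowerSeries.coeff n (formalExp H)
      = ∑ k ∈ Finset.range M, ((k.factorial : ℂ))⁻¹ * PowerSeries.coeff n (H ^ k) := by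
  rw [formalExp, PowerSeries.coeff_mk]
  apply Finset.sum_subset
  · intro k hk; rw [Finset.mem_range] at *; omega
  · intro k _ hk
    rw [Finset.mem_range, not_lt] at hk
    rw [coeff_pow_eq_zero' hH (by omega), mul_zero]

lemma coeff_formalLog (hF : PowerSeries.constantCoeff F = 1) (n M : ℕ) (hM : n < M) :
    PowerSeries.coeff n (formalLog F)
      = ∑ k ∈ Finset.range M,
          (-1 : ℂ) ^ (k + 1) * (k : ℂ)⁻¹ * PowerSeries.coeff n ((F - 1) ^ k) := by
  have hF1 : PowerSeries.constantCoeff (F - 1) = 0 := by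
    rw [map_sub, hF, map_one, sub_self]
  rw [formalLog, PowerSeries.coeff_mk]
  apply Finset.sum_subset
  · intro k hk; rw [Finset.mem_range] at *; omega
  · intro k _ hk
    rw [Finset.mem_range, not_lt] at hk
    rw [coeff_pow_eq_zero' hF1 (by omega), mul_zero]

lemma constantCoeff_formalExp (hH : PowerSeries.constantCoeff H = 0) :
    PowerSeries.constantCoeff (formalExp H) = 1 := by
  have : PowerSeries.constantCoeff (formalExp H) = PowerSeries.coeff 0 (formalExp H) := by
    simp [PowerSeries.coeff_zero_eq_constantCoeff]
  rw [this, formalExp, PowerSeries.coeff_mk]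
  simp

lemma constantCoeff_formalLog (F : PowerSeries ℂ) :
    PowerSeries.constantCoeff (formalLog F) = 0 := by
  have : PowerSeries.constantCoeff (formalLog F) = PowerSeries.coeff 0 (formalLog F) := by
    simp [PowerSeries.coeff_zero_eq_constantCoeff]
  rw [this, formalLog, PowerSeries.coeff_mk]
  simp

end PS
section PS2
variable {G H F : PowerSeries ℂ}

lemma coeff_mul_natCast (φ : PowerSeries ℂ) (c n : ℕ) :
    PowerSeries.coeff n (φ * (c : PowerSeries ℂ)) = (c : ℂ) * PowerSeries.coeff n φ := by
  rw [← map_natCast (PowerSeries.C) c, PowerSeries.coeff_mul_C]; ring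

lemma inv_factorial_mul_choose (i j : ℕ) :
    (((i + j).factorial : ℂ))⁻¹ * ((i + j).choose i : ℂ)
      = ((i.factorial : ℂ))⁻¹ * ((j.factorial : ℂ))⁻¹ := by
  rw [Nat.cast_choose ℂ (Nat.le_add_right i j), Nat.add_sub_cancel_left]
  have h1 : ((i + j).factorial : ℂ) ≠ 0 := Nat.cast_ne_zero.mpr (Nat.factorial_ne_zero _)
  have h2 : (i.factorial : ℂ) ≠ 0 := Nat.cast_ne_zero.mpr (Nat.factorial_ne_zero _)
  have h3 : (j.factorial : ℂ) ≠ 0 := Nat.cast_ne_zero.mpr (Nat.factorial_ne_zero _)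
  field_simp

lemma formalExp_add (hG : PowerSeries.constantCoeff G = 0)
    (hH : PowerSeries.constantCoeff H = 0) :
    formalExp (G + H) = formalExp G * formalExp H := by
  have hGH : PowerSeries.constantCoeff (G + H) = 0 := by rw [map_add, hG, hH, add_zero]
  ext n
  rw [coeff_formalExp hGH n (n+1) (by omega), PowerSeries.coeff_mul]
  have rhs_eq : ∑ p ∈ Finset.HasAntidiagonal.antidiagonal n,
        PowerSeries.coeff p.1 (formalExp G) * PowerSeries.coeff p.2 (formalExp H)
      = ∑ i ∈ Finset.range (n+1), ∑ j ∈ Finset.range (n+1),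
          ((i.factorial : ℂ))⁻¹ * ((j.factorial : ℂ))⁻¹ * PowerSeries.coeff n (G ^ i * H ^ j) := by
    calc
      ∑ p ∈ Finset.HasAntidiagonal.antidiagonal n,
          PowerSeries.coeff p.1 (formalExp G) * PowerSeries.coeff p.2 (formalExp H)
          = ∑ p ∈ Finset.HasAntidiagonal.antidiagonal n, ∑ i ∈ Finset.range (n+1), ∑ j ∈ Finset.range (n+1),
              (((i.factorial : ℂ))⁻¹ * PowerSeries.coeff p.1 (G ^ i)) *
                (((j.factorial : ℂ))⁻¹ * PowerSeries.coeff p.2 (H ^ j)) := by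
        refine Finset.sum_congr rfl fun p hp => ?_
        rw [Finset.HasAntidiagonal.mem_antidiagonal] at hp
        rw [coeff_formalExp hG p.1 (n+1) (by omega), coeff_formalExp hH p.2 (n+1) (by omega),
          Finset.sum_mul_sum]
      _ = _ := by
        rw [Finset.sum_comm]
        refine Finset.sum_congr rfl fun i _ => ?_
        rw [Finset.sum_comm]
        refine Finset.sum_congr rfl fun j _ => ?_
        rw [PowerSeries.coeff_mul, Finset.mul_sum]
        exact Finset.sum_congr rfl fun p _ => by ring
  rw [rhs_eq]
  calc
    ∑ k ∈ Finset.range (n+1), ((k.factorial : ℂ))⁻¹ * PowerSeries.coeff n ((G + H) ^ k)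
        = ∑ k ∈ Finset.range (n+1), ∑ i ∈ Finset.range (n+1),
            ((k.factorial : ℂ))⁻¹ * ((k.choose i : ℂ) * PowerSeries.coeff n (G ^ i * H ^ (k - i))) := by
      refine Finset.sum_congr rfl fun k hk => ?_
      rw [Finset.mem_range] at hk
      rw [add_pow, map_sum]
      simp only [coeff_mul_natCast]
      rw [Finset.mul_sum]
      apply Finset.sum_subset
      · intro i hi; rw [Finset.mem_range] at *; omega
      · intro i _ hi
        rw [Finset.mem_range, not_lt] at hi
        rw [Nat.choose_eq_zero_of_lt (by omega)]
        push_cast; ring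
    _ = ∑ i ∈ Finset.range (n+1), ∑ j ∈ Finset.range (n+1),
            ((i.factorial : ℂ))⁻¹ * ((j.factorial : ℂ))⁻¹ * PowerSeries.coeff n (G ^ i * H ^ j) := by
      rw [Finset.sum_comm]
      refine Finset.sum_congr rfl fun i hi => ?_
      rw [Finset.mem_range] at hi
      have step1 : ∑ k ∈ Finset.range (n+1),
            ((k.factorial : ℂ))⁻¹ * ((k.choose i : ℂ) * PowerSeries.coeff n (G ^ i * H ^ (k - i)))
          = ∑ k ∈ Finset.Ico i (n+1),
            ((k.factorial : ℂ))⁻¹ * ((k.choose i : ℂ) * PowerSeries.coeff n (G ^ i * H ^ (k - i))) := by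
        symm
        apply Finset.sum_subset
        · intro k hk; rw [Finset.mem_Ico] at hk; rw [Finset.mem_range]; omega
        · intro k hk hk2
          rw [Finset.mem_range] at hk
          rw [Finset.mem_Ico, not_and_or, not_le, not_lt] at hk2
          have : k < i := by omega
          rw [Nat.choose_eq_zero_of_lt this]
          push_cast; ring
      rw [step1, Finset.sum_Ico_eq_sum_range]
      have step2 : ∀ j ∈ Finset.range (n + 1 - i),
          (((i+j).factorial : ℂ))⁻¹ * (((i+j).choose i : ℂ) * PowerSeries.coeff n (G ^ i * H ^ (i + j - i)))
            = ((i.factorial : ℂ))⁻¹ * ((j.factorial : ℂ))⁻¹ * PowerSeries.coeff n (G ^ i * H ^ j) := by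
        intro j _
        rw [Nat.add_sub_cancel_left, ← mul_assoc, inv_factorial_mul_choose]
      rw [Finset.sum_congr rfl step2]
      apply Finset.sum_subset
      · intro j hj; rw [Finset.mem_range] at *; omega
      · intro j hj hj2
        rw [Finset.mem_range] at hj
        rw [Finset.mem_range, not_lt] at hj2
        rw [coeff_mul_pow_eq_zero hG hH (by omega), mul_zero]
end PS2
section PS3
variable {G H F F' : PowerSeries ℂ}

lemma coeff_pow_congr {n : ℕ} (h : ∀ j, j < n → PowerSeries.coeff j G = PowerSeries.coeff j H) :
    ∀ (k) (m), m < n → PowerSeries.coeff m (G ^ k) = PowerSeries.coeff m (H ^ k) := by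
  intro k
  induction k with
  | zero => intro m _; simp
  | succ k ih =>
    intro m hm
    rw [pow_succ, pow_succ, PowerSeries.coeff_mul, PowerSeries.coeff_mul]
    refine Finset.sum_congr rfl fun p hp => ?_
    rw [Finset.HasAntidiagonal.mem_antidiagonal] at hp
    rw [ih p.1 (by omega), h p.2 (by omega)]

lemma coeff_pow_congr_top (hG : PowerSeries.constantCoeff G = 0)
    (hH : PowerSeries.constantCoeff H = 0) {n : ℕ}
    (h : ∀ j, j < n → PowerSeries.coeff j G = PowerSeries.coeff j H) {k : ℕ} (hk : 2 ≤ k) :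
    PowerSeries.coeff n (G ^ k) = PowerSeries.coeff n (H ^ k) := by
  obtain ⟨k', rfl⟩ : ∃ k', k = k' + 1 := ⟨k - 1, by omega⟩
  have hk' : 1 ≤ k' := by omega
  rw [pow_succ, pow_succ, PowerSeries.coeff_mul, PowerSeries.coeff_mul]
  refine Finset.sum_congr rfl fun p hp => ?_
  rw [Finset.HasAntidiagonal.mem_antidiagonal] at hp
  rcases Nat.eq_zero_or_pos p.2 with h2 | h2
  · rw [h2, PowerSeries.coeff_zero_eq_constantCoeff, hG, hH, mul_zero, mul_zero]
  rcases Nat.eq_zero_or_pos p.1 with h1 | h1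
  · rw [h1, PowerSeries.coeff_zero_eq_constantCoeff, map_pow, map_pow, hG, hH,
      zero_pow (by omega), zero_mul, zero_mul]
  rw [coeff_pow_congr h k' p.1 (by omega), h p.2 (by omega)]

lemma formalExp_inj (hG : PowerSeries.constantCoeff G = 0)
    (hH : PowerSeries.constantCoeff H = 0) (he : formalExp G = formalExp H) : G = H := by
  ext n
  induction n using Nat.strong_induction_on with
  | _ n ih =>
    match n with
    | 0 => rw [PowerSeries.coeff_zero_eq_constantCoeff, hG, hH]
    | (m+1) =>
      have hc := congrArg (PowerSeries.coeff (m+1)) he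
      rw [coeff_formalExp hG (m+1) (m+3) (by omega),
        coeff_formalExp hH (m+1) (m+3) (by omega)] at hc
      simp only [Finset.sum_range_succ'] at hc
      have heq3 : ∀ k : ℕ, PowerSeries.coeff (m+1) (G ^ (k+1+2)) = PowerSeries.coeff (m+1) (H ^ (k+1+2)) :=
        fun k => coeff_pow_congr_top hG hH (fun j hj => ih j hj) (by omega)
      have heq2 : PowerSeries.coeff (m+1) (G ^ 2) = PowerSeries.coeff (m+1) (H ^ 2) :=
        coeff_pow_congr_top hG hH (fun j hj => ih j hj) le_rfl
      simp only [heq3, heq2] at hc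
      simpa using hc

lemma formalLog_inj (hF : PowerSeries.constantCoeff F = 1)
    (hF' : PowerSeries.constantCoeff F' = 1) (he : formalLog F = formalLog F') : F = F' := by
  have h1 : PowerSeries.constantCoeff (F - 1) = 0 := by rw [map_sub, hF, map_one, sub_self]
  have h1' : PowerSeries.constantCoeff (F' - 1) = 0 := by rw [map_sub, hF', map_one, sub_self]
  ext n
  induction n using Nat.strong_induction_on with
  | _ n ih =>
    match n with
    | 0 => rw [PowerSeries.coeff_zero_eq_constantCoeff, hF, hF']
    | (m+1) =>
      have hc := congrArg (PowerSeries.coeff (m+1)) he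
      rw [coeff_formalLog hF (m+1) (m+3) (by omega),
        coeff_formalLog hF' (m+1) (m+3) (by omega)] at hc
      simp only [Finset.sum_range_succ'] at hc
      have hsub : ∀ j, j < m + 1 →
          PowerSeries.coeff j (F - 1) = PowerSeries.coeff j (F' - 1) := by
        intro j hj
        rw [map_sub, map_sub, ih j hj]
      have heq3 : ∀ k : ℕ,
          PowerSeries.coeff (m+1) ((F - 1) ^ (k+1+2)) = PowerSeries.coeff (m+1) ((F' - 1) ^ (k+1+2)) :=
        fun k => coeff_pow_congr_top h1 h1' hsub (by omega)
      have heq2 : PowerSeries.coeff (m+1) ((F - 1) ^ 2) = PowerSeries.coeff (m+1) ((F' - 1) ^ 2) :=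
        coeff_pow_congr_top h1 h1' hsub le_rfl
      simp only [heq3, heq2] at hc
      simpa using hc
end PS3
section PS4
variable {G H F : PowerSeries ℂ}

lemma fact_inv_succ (k : ℕ) :
    (((k+1).factorial : ℂ))⁻¹ * (((k+1) : ℕ) : ℂ) = ((k.factorial : ℂ))⁻¹ := by
  have h1 : (((k+1):ℕ) : ℂ) ≠ 0 := Nat.cast_ne_zero.mpr (by omega)
  have h2 : (k.factorial : ℂ) ≠ 0 := Nat.cast_ne_zero.mpr (Nat.factorial_ne_zero _)
  rw [Nat.factorial_succ, Nat.cast_mul, mul_inv, mul_comm ((((k+1):ℕ):ℂ))⁻¹, mul_assoc,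
    inv_mul_cancel₀ h1, mul_one]

lemma D_formalExp (hH : PowerSeries.constantCoeff H = 0) :
    d⁄dX ℂ (formalExp H) = formalExp H * d⁄dX ℂ H := by
  ext n
  calc
    PowerSeries.coeff n (d⁄dX ℂ (formalExp H))
        = ∑ k ∈ Finset.range (n+2), ((k.factorial : ℂ))⁻¹ * PowerSeries.coeff n (d⁄dX ℂ (H ^ k)) := by
      rw [PowerSeries.coeff_derivative, coeff_formalExp hH (n+1) (n+2) (by omega), Finset.sum_mul]
      exact Finset.sum_congr rfl fun k _ => by rw [PowerSeries.coeff_derivative]; ring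
    _ = ∑ k ∈ Finset.range (n+2),
          ((k.factorial : ℂ))⁻¹ * ((k : ℂ) * PowerSeries.coeff n (H ^ (k-1) * d⁄dX ℂ H)) := by
      refine Finset.sum_congr rfl fun k _ => ?_
      rw [Derivation.leibniz_pow, map_nsmul, smul_eq_mul, nsmul_eq_mul]
    _ = ∑ j ∈ Finset.range (n+1), ((j.factorial : ℂ))⁻¹ * PowerSeries.coeff n (H ^ j * d⁄dX ℂ H) := by
      rw [Finset.sum_range_succ']
      simp only [Nat.cast_zero, zero_mul, mul_zero, add_zero]
      refine Finset.sum_congr rfl fun k _ => ?_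
      rw [Nat.add_sub_cancel, ← mul_assoc, fact_inv_succ]
    _ = PowerSeries.coeff n (formalExp H * d⁄dX ℂ H) := by
      rw [PowerSeries.coeff_mul]
      have : ∀ p ∈ Finset.HasAntidiagonal.antidiagonal n,
          PowerSeries.coeff p.1 (formalExp H) * PowerSeries.coeff p.2 (d⁄dX ℂ H)
            = ∑ j ∈ Finset.range (n+1),
                ((j.factorial : ℂ))⁻¹ * (PowerSeries.coeff p.1 (H ^ j) * PowerSeries.coeff p.2 (d⁄dX ℂ H)) := by
        intro p hp
        rw [Finset.HasAntidiagonal.mem_antidiagonal] at hp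
        rw [coeff_formalExp hH p.1 (n+1) (by omega), Finset.sum_mul]
        exact Finset.sum_congr rfl fun j _ => by ring
      rw [Finset.sum_congr rfl this, Finset.sum_comm]
      refine Finset.sum_congr rfl fun j _ => ?_
      rw [PowerSeries.coeff_mul, Finset.mul_sum]

lemma D_formalLog_mul (hF : PowerSeries.constantCoeff F = 1) :
    d⁄dX ℂ (formalLog F) * F = d⁄dX ℂ F := by
  set u : PowerSeries ℂ := F - 1 with hu_def
  have hu : PowerSeries.constantCoeff u = 0 := by rw [hu_def, map_sub, hF, map_one, sub_self]
  have hnu : PowerSeries.constantCoeff (-u) = 0 := by rw [map_neg, hu, neg_zero]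
  have hDu : d⁄dX ℂ u = d⁄dX ℂ F := by rw [hu_def, map_sub, Derivation.map_one_eq_zero, sub_zero]
  ext n
  have claimA : ∀ a, a ≤ n → PowerSeries.coeff a (d⁄dX ℂ (formalLog F))
      = PowerSeries.coeff a ((∑ j ∈ Finset.range (n+1), (-u) ^ j) * d⁄dX ℂ F) := by
    intro a ha
    calc
      PowerSeries.coeff a (d⁄dX ℂ (formalLog F))
          = ∑ k ∈ Finset.range (a+2),
              (-1 : ℂ) ^ (k+1) * (k : ℂ)⁻¹ * ((k : ℂ) * PowerSeries.coeff a (u ^ (k-1) * d⁄dX ℂ F)) := by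
        rw [PowerSeries.coeff_derivative, coeff_formalLog hF (a+1) (a+2) (by omega), Finset.sum_mul]
        refine Finset.sum_congr rfl fun k _ => ?_
        have : PowerSeries.coeff (a+1) (u ^ k) * ((a:ℂ) + 1) = PowerSeries.coeff a (d⁄dX ℂ (u ^ k)) := by
          rw [PowerSeries.coeff_derivative]
        rw [mul_assoc, this, Derivation.leibniz_pow, map_nsmul, smul_eq_mul, nsmul_eq_mul, hDu]
      _ = ∑ j ∈ Finset.range (a+1), PowerSeries.coeff a ((-u) ^ j * d⁄dX ℂ F) := by
        rw [Finset.sum_range_succ']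
        simp only [Nat.cast_zero, inv_zero, mul_zero, zero_mul, add_zero]
        refine Finset.sum_congr rfl fun j _ => ?_
        rw [Nat.add_sub_cancel]
        have h1 : (((j+1) : ℕ) : ℂ) ≠ 0 := Nat.cast_ne_zero.mpr (by omega)
        have hneg : ((-u) ^ j : PowerSeries ℂ) = (-1 : ℂ) ^ j • (u ^ j) := by
          rw [neg_pow u j, PowerSeries.smul_eq_C_mul, map_pow, map_neg, map_one]
        rw [hneg, smul_mul_assoc, map_smul, smul_eq_mul,
          show ((-1:ℂ)) ^ (j+1+1) = (-1:ℂ) ^ j from by rw [pow_succ, pow_succ]; ring,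
          mul_assoc, inv_mul_cancel_left₀ h1]
      _ = PowerSeries.coeff a ((∑ j ∈ Finset.range (n+1), (-u) ^ j) * d⁄dX ℂ F) := by
        rw [Finset.sum_mul, map_sum]
        apply Finset.sum_subset
        · intro j hj; rw [Finset.mem_range] at *; omega
        · intro j _ hj
          rw [Finset.mem_range, not_lt] at hj
          rw [PowerSeries.coeff_mul]
          apply Finset.sum_eq_zero
          rintro ⟨c, d⟩ hcd
          rw [Finset.HasAntidiagonal.mem_antidiagonal] at hcd
          rw [coeff_pow_eq_zero' hnu (by omega), zero_mul]
  set P : PowerSeries ℂ := ∑ j ∈ Finset.range (n+1), (-u) ^ j with hP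
  have hPF : P * F = 1 - (-u) ^ (n+1) := by
    have := geom_sum_mul (-u) (n+1)
    have hF1 : F = 1 - (-u) := by rw [hu_def]; ring
    rw [hF1, ← hP] at *
    calc P * (1 - -u) = -(P * (-u - 1)) := by ring
      _ = -((-u) ^ (n+1) - 1) := by rw [this]
      _ = 1 - (-u) ^ (n+1) := by ring
  calc
    PowerSeries.coeff n (d⁄dX ℂ (formalLog F) * F)
        = PowerSeries.coeff n (P * d⁄dX ℂ F * F) := by
      rw [PowerSeries.coeff_mul, PowerSeries.coeff_mul]
      refine Finset.sum_congr rfl fun p hp => ?_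
      rw [Finset.HasAntidiagonal.mem_antidiagonal] at hp
      rw [claimA p.1 (by omega)]
    _ = PowerSeries.coeff n (d⁄dX ℂ F * (1 - (-u) ^ (n+1))) := by
      rw [show P * d⁄dX ℂ F * F = d⁄dX ℂ F * (P * F) from by ring, hPF]
    _ = PowerSeries.coeff n (d⁄dX ℂ F) := by
      rw [mul_sub, mul_one, map_sub]
      have : PowerSeries.coeff n (d⁄dX ℂ F * (-u) ^ (n+1)) = 0 := by
        rw [PowerSeries.coeff_mul]
        apply Finset.sum_eq_zero
        rintro ⟨c, d⟩ hcd
        rw [Finset.HasAntidiagonal.mem_antidiagonal] at hcd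
        rw [coeff_pow_eq_zero' hnu (by omega), mul_zero]
      rw [this, sub_zero]

lemma formalLog_formalExp (hH : PowerSeries.constantCoeff H = 0) :
    formalLog (formalExp H) = H := by
  have hE : PowerSeries.constantCoeff (formalExp H) = 1 := constantCoeff_formalExp hH
  apply PowerSeries.derivative.ext
  · have h1 := D_formalLog_mul hE
    rw [D_formalExp hH] at h1
    have hne : formalExp H ≠ 0 := by
      intro h0
      rw [h0, map_zero] at hE
      exact zero_ne_one hE
    refine mul_right_cancel₀ hne ?_
    rw [h1]; ring
  · rw [constantCoeff_formalLog, hH]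

lemma formalExp_formalLog (hF : PowerSeries.constantCoeff F = 1) :
    formalExp (formalLog F) = F :=
  formalLog_inj (constantCoeff_formalExp (constantCoeff_formalLog F)) hF
    (formalLog_formalExp (constantCoeff_formalLog F))
end PS4
section PS5

lemma neg_one_pow_sub (n k : ℕ) (h : k ≤ n) : (-1 : ℂ) ^ (n - k) = (-1) ^ n * (-1) ^ k := by
  have hnk : n - k + 2 * k = n + k := by omega
  calc (-1 : ℂ) ^ (n - k) = (-1 : ℂ) ^ (n - k) * ((-1 : ℂ) ^ 2) ^ k := by norm_num
    _ = (-1 : ℂ) ^ (n - k + 2 * k) := by rw [← pow_mul, ← pow_add]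
    _ = (-1 : ℂ) ^ (n + k) := by rw [hnk]
    _ = (-1 : ℂ) ^ n * (-1 : ℂ) ^ k := by rw [pow_add]

lemma coeff_exp' (n : ℕ) : PowerSeries.coeff n (PowerSeries.exp ℂ) = ((n.factorial : ℂ))⁻¹ := by
  rw [PowerSeries.coeff_exp]
  rw [show ((1 : ℚ) / n.factorial : ℚ) = (n.factorial : ℚ)⁻¹ from one_div _]
  rw [map_inv₀, map_natCast]

lemma constantCoeff_expSub1DivT : PowerSeries.constantCoeff expSub1DivT = 1 := by
  rw [← PowerSeries.coeff_zero_eq_constantCoeff, expSub1DivT, PowerSeries.coeff_mk]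
  norm_num

lemma base_mul_S : bernoulliBase * expSub1DivT = 1 :=
  PowerSeries.inv_mul_cancel _ (by rw [constantCoeff_expSub1DivT]; exact one_ne_zero)

lemma constantCoeff_base : PowerSeries.constantCoeff bernoulliBase = 1 := by
  have := congrArg (PowerSeries.constantCoeff) base_mul_S
  rw [map_mul, constantCoeff_expSub1DivT, mul_one, map_one] at this
  exact this

lemma alt_sum_choose_aux (n : ℕ) :
    ∑ k ∈ Finset.range (n+1), (-1 : ℂ) ^ k * ((n+1).choose k : ℂ) = (-1) ^ n := by
  have hz := Int.alternating_sum_range_choose_of_ne (n := n + 1) (by omega)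
  have hzc : ∑ m ∈ Finset.range (n+2), (-1 : ℂ) ^ m * ((n+1).choose m : ℂ) = 0 := by
    exact_mod_cast congrArg (fun z : ℤ => (z : ℂ)) hz
  rw [Finset.sum_range_succ, Nat.choose_self] at hzc
  have : ∑ k ∈ Finset.range (n+1), (-1 : ℂ) ^ k * ((n+1).choose k : ℂ) = -((-1) ^ (n+1)) := by
    push_cast at hzc ⊢
    linear_combination hzc
  rw [this, pow_succ]
  ring

lemma exp_mul_rescale_S :
    PowerSeries.exp ℂ * (PowerSeries.rescale (-1) expSub1DivT) = expSub1DivT := by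
  ext n
  rw [PowerSeries.coeff_mul,
    Finset.Nat.sum_antidiagonal_eq_sum_range_succ
      (fun a b => PowerSeries.coeff a (PowerSeries.exp ℂ) *
        PowerSeries.coeff b (PowerSeries.rescale (-1) expSub1DivT)) n]
  have hterm : ∀ k ∈ Finset.range (n+1),
      PowerSeries.coeff k (PowerSeries.exp ℂ) *
        PowerSeries.coeff (n-k) (PowerSeries.rescale (-1) expSub1DivT)
      = (((n+1).factorial : ℂ))⁻¹ * ((-1) ^ n * ((-1) ^ k * ((n+1).choose k : ℂ))) := by
    intro k hk
    rw [Finset.mem_range] at hk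
    have hkn : k ≤ n := by omega
    rw [coeff_exp', PowerSeries.coeff_rescale, expSub1DivT, PowerSeries.coeff_mk,
      neg_one_pow_sub n k hkn]
    have hch : (((n+1).choose k : ℕ) : ℂ) = ((n+1).factorial : ℂ) /
        ((k.factorial : ℂ) * (((n+1-k).factorial : ℂ))) := Nat.cast_choose ℂ (by omega)
    have hsub : n + 1 - k = n - k + 1 := by omega
    rw [hch, hsub]
    have h1 : (k.factorial : ℂ) ≠ 0 := Nat.cast_ne_zero.mpr (Nat.factorial_ne_zero _)
    have h2 : (((n-k+1).factorial : ℂ)) ≠ 0 := Nat.cast_ne_zero.mpr (Nat.factorial_ne_zero _)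
    have h3 : (((n+1).factorial : ℂ)) ≠ 0 := Nat.cast_ne_zero.mpr (Nat.factorial_ne_zero _)
    field_simp
  rw [Finset.sum_congr rfl hterm, ← Finset.mul_sum, ← Finset.mul_sum, alt_sum_choose_aux]
  rw [expSub1DivT, PowerSeries.coeff_mk]
  have : (-1 : ℂ) ^ n * (-1 : ℂ) ^ n = 1 := by
    rw [← pow_add]
    exact Even.neg_one_pow (Even.add_self n)
  rw [this, mul_one]

lemma rescale_base :
    PowerSeries.rescale (-1) bernoulliBase = PowerSeries.exp ℂ * bernoulliBase := by
  have h2 := congrArg (PowerSeries.rescale (-1)) base_mul_S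
  rw [map_mul, map_one] at h2
  calc PowerSeries.rescale (-1) bernoulliBase
      = PowerSeries.rescale (-1) bernoulliBase * (expSub1DivT * bernoulliBase) := by
        rw [mul_comm expSub1DivT, base_mul_S, mul_one]
    _ = PowerSeries.rescale (-1) bernoulliBase *
          ((PowerSeries.exp ℂ * PowerSeries.rescale (-1) expSub1DivT) * bernoulliBase) := by
        rw [exp_mul_rescale_S]
    _ = PowerSeries.exp ℂ * bernoulliBase *
          (PowerSeries.rescale (-1) bernoulliBase * PowerSeries.rescale (-1) expSub1DivT) := by
        ring
    _ = PowerSeries.exp ℂ * bernoulliBase := by rw [h2, mul_one]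

lemma rescale_formalLog (F : PowerSeries ℂ) :
    PowerSeries.rescale (-1) (formalLog F) = formalLog (PowerSeries.rescale (-1) F) := by
  ext n
  rw [PowerSeries.coeff_rescale, formalLog, formalLog, PowerSeries.coeff_mk, PowerSeries.coeff_mk,
    Finset.mul_sum]
  refine Finset.sum_congr rfl fun k _ => ?_
  have : (PowerSeries.rescale (-1) F - 1) ^ k = PowerSeries.rescale (-1) ((F - 1) ^ k) := by
    rw [map_pow, map_sub, map_one]
  rw [this, PowerSeries.coeff_rescale]
  ring

lemma rescale_formalExp (H : PowerSeries ℂ) :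
    PowerSeries.rescale (-1) (formalExp H) = formalExp (PowerSeries.rescale (-1) H) := by
  ext n
  rw [PowerSeries.coeff_rescale, formalExp, formalExp, PowerSeries.coeff_mk, PowerSeries.coeff_mk,
    Finset.mul_sum]
  refine Finset.sum_congr rfl fun k _ => ?_
  rw [← map_pow, PowerSeries.coeff_rescale]
  ring

lemma rescale_smul (c : ℂ) (F : PowerSeries ℂ) :
    PowerSeries.rescale (-1) (c • F) = c • PowerSeries.rescale (-1) F := by
  ext n
  rw [PowerSeries.coeff_rescale, map_smul, map_smul, PowerSeries.coeff_rescale, smul_eq_mul,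
    smul_eq_mul]
  ring

lemma coeff_formalExp_smul_X (c : ℂ) (n : ℕ) :
    PowerSeries.coeff n (formalExp (c • PowerSeries.X)) = c ^ n * ((n.factorial : ℂ))⁻¹ := by
  rw [formalExp, PowerSeries.coeff_mk]
  have hterm : ∀ k, PowerSeries.coeff n ((c • (PowerSeries.X : PowerSeries ℂ)) ^ k)
      = if n = k then c ^ n else 0 := by
    intro k
    rw [_root_.smul_pow, map_smul, PowerSeries.coeff_X_pow, smul_eq_mul]
    split_ifs with h
    · rw [h, mul_one]
    · rw [mul_zero]
  simp only [hterm]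
  rw [Finset.sum_eq_single n]
  · rw [if_pos rfl]; ring
  · intro k _ hk
    rw [if_neg (fun hh => hk hh.symm), mul_zero]
  · intro hn
    exfalso
    exact hn (Finset.self_mem_range_succ n)

lemma constantCoeff_smul_X (c : ℂ) :
    PowerSeries.constantCoeff (c • (PowerSeries.X : PowerSeries ℂ)) = 0 := by
  rw [PowerSeries.smul_eq_C_mul, map_mul, PowerSeries.constantCoeff_X, mul_zero]

lemma formalExp_X : formalExp ((1 : ℂ) • PowerSeries.X) = PowerSeries.exp ℂ := by
  ext n
  rw [coeff_formalExp_smul_X, coeff_exp', one_pow, one_mul]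

lemma constantCoeff_exp : PowerSeries.constantCoeff (PowerSeries.exp ℂ) = 1 := by
  rw [← PowerSeries.coeff_zero_eq_constantCoeff, coeff_exp']
  norm_num

lemma formalLog_exp_mul {F : PowerSeries ℂ} (hF : PowerSeries.constantCoeff F = 1) :
    formalLog (PowerSeries.exp ℂ * F) = (1 : ℂ) • PowerSeries.X + formalLog F := by
  have hEF : PowerSeries.constantCoeff (PowerSeries.exp ℂ * F) = 1 := by
    rw [map_mul, constantCoeff_exp, hF, mul_one]
  apply formalExp_inj (constantCoeff_formalLog _)
    (by rw [map_add, constantCoeff_smul_X, constantCoeff_formalLog, add_zero])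
  rw [formalExp_formalLog hEF,
    formalExp_add (constantCoeff_smul_X 1) (constantCoeff_formalLog F),
    formalExp_X, formalExp_formalLog hF]

lemma rescale_bernoulliBasePow (α : ℂ) :
    PowerSeries.rescale (-1) (bernoulliBasePow α)
      = formalExp (α • PowerSeries.X) * bernoulliBasePow α := by
  have h1 : PowerSeries.rescale (-1) (formalLog bernoulliBase)
      = PowerSeries.X + formalLog bernoulliBase := by
    rw [rescale_formalLog, rescale_base, formalLog_exp_mul constantCoeff_base, one_smul]
  have hconst : PowerSeries.constantCoeff (α • formalLog bernoulliBase) = 0 := by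
    rw [PowerSeries.smul_eq_C_mul, map_mul, constantCoeff_formalLog, mul_zero]
  rw [bernoulliBasePow, rescale_formalExp, rescale_smul, h1, smul_add,
    formalExp_add (constantCoeff_smul_X α) hconst]

end PS5
section PS6

lemma genBernoulliNumber_reflect (α : ℂ) (m : ℕ) :
    ∑ j ∈ Finset.range (m+1), (m.choose j : ℂ) * genBernoulliNumber α j * α ^ (m-j)
      = (-1) ^ m * genBernoulliNumber α m := by
  have h := congrArg (PowerSeries.coeff m) (rescale_bernoulliBasePow α)
  rw [PowerSeries.coeff_rescale, PowerSeries.coeff_mul,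
    Finset.Nat.sum_antidiagonal_eq_sum_range_succ
      (fun a b => PowerSeries.coeff a (formalExp (α • PowerSeries.X)) *
        PowerSeries.coeff b (bernoulliBasePow α)) m] at h
  simp only [coeff_formalExp_smul_X] at h
  -- h : (-1)^m * coeff m B = ∑ k in range (m+1), α^k * (k!)⁻¹ * coeff (m-k) B
  rw [genBernoulliNumber, ← Finset.sum_range_reflect]
  simp only [Nat.add_sub_cancel]
  have hterm : ∀ j ∈ Finset.range (m+1),
      (m.choose (m - j) : ℂ) * genBernoulliNumber α (m - j) * α ^ (m - (m - j))
        = (m.factorial : ℂ) * (α ^ j * ((j.factorial : ℂ))⁻¹ *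
            PowerSeries.coeff (m - j) (bernoulliBasePow α)) := by
    intro j hj
    rw [Finset.mem_range] at hj
    have hjm : j ≤ m := by omega
    rw [Nat.choose_symm hjm, Nat.sub_sub_self hjm, genBernoulliNumber]
    have hch : ((m.choose j : ℕ) : ℂ) = (m.factorial : ℂ) /
        ((j.factorial : ℂ) * (((m-j).factorial : ℂ))) := Nat.cast_choose ℂ hjm
    rw [hch]
    have h1 : (j.factorial : ℂ) ≠ 0 := Nat.cast_ne_zero.mpr (Nat.factorial_ne_zero _)
    have h2 : (((m-j).factorial : ℂ)) ≠ 0 := Nat.cast_ne_zero.mpr (Nat.factorial_ne_zero _)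
    field_simp
  rw [Finset.sum_congr rfl hterm, ← Finset.mul_sum, ← h]
  ring

lemma eval_genBernoulliPoly (α s : ℂ) (m : ℕ) :
    (genBernoulliPoly α m).eval s
      = ∑ k ∈ Finset.range (m+1), (m.choose k : ℂ) * genBernoulliNumber α k * s ^ (m-k) := by
  rw [genBernoulliPoly, Polynomial.eval_finset_sum]
  refine Finset.sum_congr rfl fun k _ => ?_
  rw [Polynomial.eval_mul, Polynomial.eval_C, Polynomial.eval_pow, Polynomial.eval_X]

lemma eval_genBernoulliPoly_at (α : ℂ) (m : ℕ) :
    (genBernoulliPoly α m).eval α = (-1) ^ m * genBernoulliNumber α m := by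
  rw [eval_genBernoulliPoly]
  exact genBernoulliNumber_reflect α m

lemma genBernoulliPoly_translate (α s t : ℂ) (m : ℕ) :
    (genBernoulliPoly α m).eval (s + t)
      = ∑ j ∈ Finset.range (m+1),
          (m.choose j : ℂ) * (genBernoulliPoly α j).eval s * t ^ (m-j) := by
  rw [eval_genBernoulliPoly]
  have hterm : ∀ k ∈ Finset.range (m+1),
      (m.choose k : ℂ) * genBernoulliNumber α k * (s + t) ^ (m-k)
        = ∑ j ∈ Finset.range (m+1),
            ((m.choose j : ℂ) * ((j.choose k : ℂ) * genBernoulliNumber α k * s ^ (j-k)) * t ^ (m-j)) := by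
    intro k hk
    rw [Finset.mem_range] at hk
    have hkm : k ≤ m := by omega
    rw [add_pow]
    rw [Finset.mul_sum]
    have step : ∀ i ∈ Finset.range (m - k + 1),
        (m.choose k : ℂ) * genBernoulliNumber α k * (s ^ i * t ^ (m - k - i) * ((m-k).choose i : ℂ))
          = (m.choose (k+i) : ℂ) * (((k+i).choose k : ℂ) * genBernoulliNumber α k * s ^ ((k+i)-k)) * t ^ (m-(k+i)) := by
      intro i hi
      rw [Finset.mem_range] at hi
      have him : k + i ≤ m := by omega
      have hcc : (m.choose (k+i)) * ((k+i).choose k) = (m.choose k) * ((m-k).choose i) := by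
        rw [Nat.choose_mul (Nat.le_add_right k i)]
        congr 1
        · congr 1
          omega
      have hcc' : ((m.choose (k+i)) : ℂ) * (((k+i).choose k) : ℂ) = ((m.choose k) : ℂ) * (((m-k).choose i) : ℂ) := by
        exact_mod_cast congrArg (fun z : ℕ => (z : ℂ)) hcc
      have he1 : (k+i) - k = i := by omega
      have he2 : m - (k+i) = m - k - i := by omega
      rw [he1, he2]
      calc (m.choose k : ℂ) * genBernoulliNumber α k * (s ^ i * t ^ (m-k-i) * ((m-k).choose i : ℂ))
          = ((m.choose k : ℂ) * ((m-k).choose i : ℂ)) * genBernoulliNumber α k * s ^ i * t ^ (m-k-i) := by ring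
        _ = ((m.choose (k+i) : ℂ) * ((k+i).choose k : ℂ)) * genBernoulliNumber α k * s ^ i * t ^ (m-k-i) := by
            rw [hcc']
        _ = _ := by ring
    rw [Finset.sum_congr rfl step]
    -- now reindex : ∑ i in range (m-k+1), f (k+i) = ∑ j in range (m+1), f j  (f j = 0 unless k ≤ j ≤ m)
    have : ∑ i ∈ Finset.range (m-k+1),
        ((m.choose (k+i) : ℂ) * (((k+i).choose k : ℂ) * genBernoulliNumber α k * s ^ ((k+i)-k)) * t ^ (m-(k+i)))
        = ∑ j ∈ Finset.Ico k (m+1),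
            ((m.choose j : ℂ) * ((j.choose k : ℂ) * genBernoulliNumber α k * s ^ (j-k)) * t ^ (m-j)) := by
      rw [Finset.sum_Ico_eq_sum_range]
      have : m + 1 - k = m - k + 1 := by omega
      rw [this]
    rw [this]
    apply Finset.sum_subset
    · intro j hj
      rw [Finset.mem_Ico] at hj
      rw [Finset.mem_range]
      omega
    · intro j hj hj2
      rw [Finset.mem_range] at hj
      rw [Finset.mem_Ico, not_and_or, not_le, not_lt] at hj2
      have : j < k := by omega
      rw [Nat.choose_eq_zero_of_lt this]
      push_cast
      ring
  rw [Finset.sum_congr rfl hterm, Finset.sum_comm]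
  refine Finset.sum_congr rfl fun j hj => ?_
  rw [Finset.mem_range] at hj
  rw [eval_genBernoulliPoly, Finset.mul_sum, Finset.sum_mul]
  symm
  apply Finset.sum_subset
  · intro k hk
    rw [Finset.mem_range] at *
    omega
  · intro k _ hk2
    rw [Finset.mem_range, not_lt] at hk2
    rw [Nat.choose_eq_zero_of_lt (show j < k by omega)]
    push_cast
    ring

lemma genBernoulliPoly_reflect (α s : ℂ) (m : ℕ) :
    (genBernoulliPoly α m).eval (α - s) = (-1) ^ m * (genBernoulliPoly α m).eval s := by
  have h : α - s = α + (-s) := by ring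
  rw [h, genBernoulliPoly_translate α α (-s) m, eval_genBernoulliPoly]
  rw [Finset.mul_sum]
  refine Finset.sum_congr rfl fun j hj => ?_
  rw [Finset.mem_range] at hj
  have hjm : j ≤ m := by omega
  rw [eval_genBernoulliPoly_at]
  have hns : (-s) ^ (m-j) = (-1 : ℂ) ^ (m-j) * s ^ (m-j) := by rw [neg_pow]
  rw [hns, neg_one_pow_sub m j hjm]
  have : (-1 : ℂ) ^ j * (-1 : ℂ) ^ j = 1 := by
    rw [← pow_add]; exact Even.neg_one_pow (Even.add_self j)
  calc (m.choose j : ℂ) * ((-1) ^ j * genBernoulliNumber α j) * ((-1) ^ m * (-1) ^ j * s ^ (m-j))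
      = ((-1 : ℂ) ^ j * (-1 : ℂ) ^ j) * ((-1) ^ m * ((m.choose j : ℂ) * genBernoulliNumber α j * s ^ (m-j))) := by
        ring
    _ = (-1) ^ m * ((m.choose j : ℂ) * genBernoulliNumber α j * s ^ (m-j)) := by rw [this, one_mul]

end PS6
section PS7

lemma fd_choose (m a b : ℕ) :
    ∑ k ∈ Finset.range (m+1), (-1 : ℤ) ^ (m-k) * (m.choose k : ℤ) * ((a+k).choose b : ℤ)
      = if m ≤ b then ((a).choose (b-m) : ℤ) else 0 := by
  have h := fwdDiff_iter_eq_sum_shift (1 : ℕ) (fun x : ℕ => ((x.choose b : ℤ))) m a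
  simp only [smul_eq_mul, nsmul_eq_mul, mul_one] at h
  have h' : (fwdDiff (1:ℕ))^[m] (fun x : ℕ => ((x.choose b : ℤ))) a
      = ∑ k ∈ Finset.range (m+1), (-1 : ℤ) ^ (m-k) * (m.choose k : ℤ) * ((a+k).choose b : ℤ) := by
    rw [h]
  rw [← h']
  rcases le_or_gt m b with hmb | hmb
  · rw [if_pos hmb]
    have hiter := fwdDiff_iter_choose (b - m) m
    rw [show m + (b - m) = b by omega] at hiter
    rw [hiter]
  · rw [if_neg (by omega)]
    have hsplit : m = (m - b) + b := by omega
    rw [hsplit, Function.iterate_add_apply]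
    have hiter := fwdDiff_iter_choose 0 b
    rw [show b + 0 = b by omega] at hiter
    rw [hiter]
    have hmb1 : m - b = (m - b - 1) + 1 := by omega
    rw [hmb1, Function.iterate_succ_apply]
    have hc : fwdDiff (1:ℕ) (fun x : ℕ => ((x.choose 0 : ℤ))) = fun _ => 0 := by
      funext x
      simp [fwdDiff]
    rw [hc]
    have hz : ∀ s : ℕ, (fwdDiff (1:ℕ))^[s] (fun _ : ℕ => (0:ℤ)) = fun _ => 0 := by
      intro s
      apply Function.iterate_fixed
      funext x
      simp [fwdDiff]
    rw [hz]

lemma choose_mul_choose_aux (mm j r : ℕ) :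
    (mm + r).choose r * mm.choose j = (j+r).choose r * (mm+r).choose (j+r) := by
  rcases le_or_gt j mm with hle | hlt
  · have hmain := Nat.choose_mul (n := mm + r) (k := j + r) (s := r) (by omega)
    rw [show mm + r - r = mm by omega, show j + r - r = j by omega] at hmain
    calc (mm + r).choose r * mm.choose j = (mm+r).choose (j+r) * (j+r).choose r := hmain.symm
      _ = (j+r).choose r * (mm+r).choose (j+r) := Nat.mul_comm _ _
  · rw [Nat.choose_eq_zero_of_lt hlt, Nat.choose_eq_zero_of_lt (show mm + r < j + r by omega),
      mul_zero, mul_zero]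

lemma innerC (ℓ n r j : ℕ) :
    ∑ k ∈ Finset.range (ℓ+r+1),
        (-1 : ℂ) ^ (ℓ+r-k) * ((ℓ+r).choose k : ℂ) * ((n+k+r).choose r : ℂ) * ((n+k).choose j : ℂ)
      = if ℓ ≤ j then ((n+r).choose (j-ℓ) : ℂ) * ((j+r).choose r : ℂ) else 0 := by
  have hZ := fd_choose (ℓ+r) (n+r) (j+r)
  have hZC : ∑ k ∈ Finset.range (ℓ+r+1),
      (-1 : ℂ) ^ (ℓ+r-k) * ((ℓ+r).choose k : ℂ) * (((n+r+k).choose (j+r) : ℕ) : ℂ)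
      = if ℓ + r ≤ j + r then (((n+r).choose (j+r-(ℓ+r)) : ℕ) : ℂ) else 0 := by
    have := congrArg (fun z : ℤ => (z : ℂ)) hZ
    push_cast at this
    split_ifs at this ⊢ with hif
    · exact_mod_cast this
    · exact_mod_cast this
  have hstep : ∀ k ∈ Finset.range (ℓ+r+1),
      (-1 : ℂ) ^ (ℓ+r-k) * ((ℓ+r).choose k : ℂ) * ((n+k+r).choose r : ℂ) * ((n+k).choose j : ℂ)
        = ((j+r).choose r : ℂ) *
            ((-1 : ℂ) ^ (ℓ+r-k) * ((ℓ+r).choose k : ℂ) * (((n+r+k).choose (j+r) : ℕ) : ℂ)) := by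
    intro k _
    have hC1 : ((n+k) + r).choose r * (n+k).choose j = (j+r).choose r * ((n+k)+r).choose (j+r) :=
      choose_mul_choose_aux (n+k) j r
    have hC1' : (((n+k) + r).choose r : ℂ) * ((n+k).choose j : ℂ)
        = ((j+r).choose r : ℂ) * ((((n+k)+r).choose (j+r) : ℕ) : ℂ) := by
      exact_mod_cast congrArg (fun z : ℕ => (z : ℂ)) hC1
    rw [show n + r + k = n + k + r by omega]
    calc (-1 : ℂ) ^ (ℓ+r-k) * ((ℓ+r).choose k : ℂ) * ((n+k+r).choose r : ℂ) * ((n+k).choose j : ℂ)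
        = ((-1 : ℂ) ^ (ℓ+r-k) * ((ℓ+r).choose k : ℂ)) * (((n+k+r).choose r : ℂ) * ((n+k).choose j : ℂ)) := by
          ring
      _ = ((-1 : ℂ) ^ (ℓ+r-k) * ((ℓ+r).choose k : ℂ)) * (((j+r).choose r : ℂ) * ((((n+k)+r).choose (j+r) : ℕ) : ℂ)) := by
          rw [hC1']
      _ = _ := by ring
  rw [Finset.sum_congr rfl hstep, ← Finset.mul_sum, hZC]
  have hiff : ℓ + r ≤ j + r ↔ ℓ ≤ j := by omega
  rw [if_congr hiff rfl rfl]
  split_ifs with hif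
  · rw [show j + r - (ℓ + r) = j - ℓ by omega]
    ring
  · rw [mul_zero]

end PS7

/-- If `x + y + z = α`, then
`(-1)^n ∑_{k=0}^{n+r} C(n+r,k) C(ℓ+k+r,r) x^{n+r-k} B_{ℓ+k}^{(α)}(y)
 = (-1)^{ℓ+r} ∑_{k=0}^{ℓ+r} C(ℓ+r,k) C(n+k+r,r) x^{ℓ+r-k} B_{n+k}^{(α)}(z)`. -/
theorem symmetry_identity (α x y z : ℂ) (h : x + y + z = α) (ℓ n r : ℕ) :
    (-1 : ℂ) ^ n *
        ∑ k ∈ Finset.range (n + r + 1),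
          ((n + r).choose k : ℂ) * ((ℓ + k + r).choose r : ℂ) * x ^ (n + r - k) *
            (genBernoulliPoly α (ℓ + k)).eval y =
    (-1 : ℂ) ^ (ℓ + r) *
        ∑ k ∈ Finset.range (ℓ + r + 1),
          ((ℓ + r).choose k : ℂ) * ((n + k + r).choose r : ℂ) * x ^ (ℓ + r - k) *
            (genBernoulliPoly α (n + k)).eval z := by
  have hz : z = α - (y + x) := by linear_combination h
  have key : ∀ m : ℕ, (genBernoulliPoly α m).eval z
      = (-1 : ℂ) ^ m * ∑ j ∈ Finset.range (m+1),
          (m.choose j : ℂ) * (genBernoulliPoly α j).eval y * x ^ (m-j) := by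
    intro m
    rw [hz, genBernoulliPoly_reflect α (y+x) m, genBernoulliPoly_translate α y x m]
  set T : ℂ := ∑ j ∈ Finset.range (n+ℓ+r+1),
      (if ℓ ≤ j then ((n+r).choose (j-ℓ) : ℂ) * ((j+r).choose r : ℂ) else 0) *
        (genBernoulliPoly α j).eval y * x ^ (n+ℓ+r-j) with hT
  have hL : ∑ k ∈ Finset.range (n + r + 1),
      ((n + r).choose k : ℂ) * ((ℓ + k + r).choose r : ℂ) * x ^ (n + r - k) *
        (genBernoulliPoly α (ℓ + k)).eval y = T := by
    rw [hT]
    symm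
    calc ∑ j ∈ Finset.range (n+ℓ+r+1),
        (if ℓ ≤ j then ((n+r).choose (j-ℓ) : ℂ) * ((j+r).choose r : ℂ) else 0) *
          (genBernoulliPoly α j).eval y * x ^ (n+ℓ+r-j)
        = ∑ j ∈ Finset.Ico ℓ (n+ℓ+r+1),
            (if ℓ ≤ j then ((n+r).choose (j-ℓ) : ℂ) * ((j+r).choose r : ℂ) else 0) *
              (genBernoulliPoly α j).eval y * x ^ (n+ℓ+r-j) := by
          symm
          apply Finset.sum_subset
          · intro j hj
            rw [Finset.mem_Ico] at hj
            rw [Finset.mem_range]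
            omega
          · intro j hj hj2
            rw [Finset.mem_range] at hj
            rw [Finset.mem_Ico, not_and_or, not_le, not_lt] at hj2
            have hnl : ¬ ℓ ≤ j := by omega
            rw [if_neg hnl, zero_mul, zero_mul]
      _ = ∑ k ∈ Finset.range (n+r+1),
            (if ℓ ≤ ℓ + k then ((n+r).choose (ℓ+k-ℓ) : ℂ) * ((ℓ+k+r).choose r : ℂ) else 0) *
              (genBernoulliPoly α (ℓ+k)).eval y * x ^ (n+ℓ+r-(ℓ+k)) := by
          rw [Finset.sum_Ico_eq_sum_range, show n+ℓ+r+1-ℓ = n+r+1 by omega]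
      _ = _ := by
          refine Finset.sum_congr rfl fun k hk => ?_
          rw [Finset.mem_range] at hk
          rw [if_pos (Nat.le_add_right ℓ k), show ℓ+k-ℓ = k by omega,
            show n+ℓ+r-(ℓ+k) = n+r-k by omega]
          ring
  have hper : ∀ k ∈ Finset.range (ℓ+r+1),
      (-1 : ℂ) ^ (ℓ+r) * (((ℓ + r).choose k : ℂ) * ((n + k + r).choose r : ℂ) * x ^ (ℓ + r - k) *
          (genBernoulliPoly α (n + k)).eval z)
      = ∑ j ∈ Finset.range (n+ℓ+r+1),
          (-1 : ℂ) ^ n * ((-1 : ℂ) ^ (ℓ+r-k) * ((ℓ+r).choose k : ℂ) * ((n+k+r).choose r : ℂ) *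
            ((n+k).choose j : ℂ)) * (genBernoulliPoly α j).eval y * x ^ (n+ℓ+r-j) := by
    intro k hk
    rw [Finset.mem_range] at hk
    rw [key (n+k)]
    simp only [Finset.mul_sum]
    trans (∑ j ∈ Finset.range (n+k+1),
        (-1 : ℂ) ^ n * ((-1 : ℂ) ^ (ℓ+r-k) * ((ℓ+r).choose k : ℂ) * ((n+k+r).choose r : ℂ) *
          ((n+k).choose j : ℂ)) * (genBernoulliPoly α j).eval y * x ^ (n+ℓ+r-j))
    · refine Finset.sum_congr rfl fun j hj => ?_
      rw [Finset.mem_range] at hj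
      have hs := neg_one_pow_sub (ℓ+r) k (by omega)
      have hx : x ^ (ℓ+r-k) * x ^ (n+k-j) = x ^ (n+ℓ+r-j) := by
        rw [← pow_add, show (ℓ+r-k) + (n+k-j) = n+ℓ+r-j by omega]
      rw [hs, ← hx]
      ring
    · apply Finset.sum_subset
      · intro j hj
        rw [Finset.mem_range] at *
        omega
      · intro j hj hj2
        rw [Finset.mem_range] at hj
        rw [Finset.mem_range, not_lt] at hj2
        rw [Nat.choose_eq_zero_of_lt (show n + k < j by omega)]
        push_cast
        ring
  have hR : (-1 : ℂ) ^ (ℓ + r) *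
      ∑ k ∈ Finset.range (ℓ + r + 1),
        ((ℓ + r).choose k : ℂ) * ((n + k + r).choose r : ℂ) * x ^ (ℓ + r - k) *
          (genBernoulliPoly α (n + k)).eval z
      = (-1 : ℂ) ^ n * T := by
    rw [Finset.mul_sum, Finset.sum_congr rfl hper, Finset.sum_comm, hT, Finset.mul_sum]
    refine Finset.sum_congr rfl fun j hj => ?_
    rw [← Finset.sum_mul, ← Finset.sum_mul, ← Finset.mul_sum, innerC ℓ n r j]
    ring
  rw [hL, ← hR]
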